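/- Define T_n(x) as the coefficient of a^{n−1} in the elephant polynomial R_n viewed as a polynomial in a. Then T_1(x) = x and T_{n+1}(x) = ((x²−1)/n)·T_n'(x) for n ≥ 1; moreover T_n(x) = (−1)^{n−1} V_{n−1}(x)/(n−1)!, where V_0(x) = x and V_{n+1}(x) = (1−x²)·V_n'(x), so that V_n(tanh x) is the n-th derivative of tanh. -/

import Mathlib

open Polynomial

/-- The elephant polynomials as elements of `(ℝ[a])[x]`: the outer variable is `x`,
the inner variable is the parameter `a` (so `a` is `C X`), and the factor `a/n`
is the inner polynomial `(1/n) * X`. -/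
noncomputable def elephantR2 : ℕ → Polynomial (Polynomial ℝ)
  | 0 => 1
  | 1 => X
  | n + 2 => X * elephantR2 (n + 1) -
      C (Polynomial.C (((n : ℝ) + 1))⁻¹ * Polynomial.X) *
        ((1 - X ^ 2) * (elephantR2 (n + 1)).derivative)

/-- `elephantT n` is the coefficient of `a^(n-1)` in `R_n`, as a polynomial in `x`. -/
noncomputable def elephantT (n : ℕ) : Polynomial ℝ :=
  (elephantR2 n).sum fun i c => Polynomial.C (c.coeff (n - 1)) * Polynomial.X ^ i

/-- `V 0 = x`, `V (n+1) = (1 - x^2) * V n'`, so that `V n (tanh x) = tanh⁽ⁿ⁾(x)`. -/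
noncomputable def elephantV : ℕ → Polynomial ℝ
  | 0 => X
  | n + 1 => (1 - X ^ 2) * (elephantV n).derivative

noncomputable def Lk (k : ℕ) (p : Polynomial (Polynomial ℝ)) : Polynomial ℝ :=
  p.sum fun i c => Polynomial.C (c.coeff k) * Polynomial.X ^ i

lemma coeff_Lk (k : ℕ) (p : Polynomial (Polynomial ℝ)) (i : ℕ) :
    (Lk k p).coeff i = (p.coeff i).coeff k := by
  rw [Lk, Polynomial.sum, finset_sum_coeff]
  simp only [coeff_C_mul, coeff_X_pow, mul_ite, mul_one, mul_zero]
  rw [Finset.sum_ite_eq p.support i fun j => (p.coeff j).coeff k]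
  by_cases h : i ∈ p.support
  · simp [h]
  · simp [h, Polynomial.notMem_support_iff.mp h]

lemma Lk_sub (k : ℕ) (p q : Polynomial (Polynomial ℝ)) : Lk k (p - q) = Lk k p - Lk k q := by
  ext i; simp [coeff_Lk]

lemma Lk_X_mul (k : ℕ) (p : Polynomial (Polynomial ℝ)) : Lk k (X * p) = X * Lk k p := by
  ext i
  cases i with
  | zero => simp [coeff_Lk]
  | succ i => simp [coeff_Lk, coeff_X_mul]

lemma Lk_C_X_mul (k : ℕ) (c : ℝ) (p : Polynomial (Polynomial ℝ)) :
    Lk (k + 1) (C (Polynomial.C c * Polynomial.X) * p) = Polynomial.C c * Lk k p := by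
  ext i
  simp [coeff_Lk, coeff_C_mul, mul_assoc, mul_comm Polynomial.X ((p.coeff i)), coeff_mul_X]

lemma Lk_map_C_mul (k : ℕ) (u : Polynomial ℝ) (p : Polynomial (Polynomial ℝ)) :
    Lk k (u.map Polynomial.C * p) = u * Lk k p := by
  ext i
  rw [coeff_Lk, coeff_mul, coeff_mul]
  rw [Polynomial.finset_sum_coeff]
  refine Finset.sum_congr rfl fun x hx => ?_
  simp [coeff_Lk, Polynomial.coeff_map]

lemma Lk_derivative (k : ℕ) (p : Polynomial (Polynomial ℝ)) :
    Lk k (derivative p) = derivative (Lk k p) := by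
  ext i
  rw [coeff_Lk, coeff_derivative, coeff_derivative, coeff_Lk]
  have : ((i : Polynomial ℝ) + 1) = Polynomial.C ((i:ℝ) + 1) := by simp
  rw [this, coeff_mul_C]

lemma Lk_one_sub_X_sq_mul (k : ℕ) (p : Polynomial (Polynomial ℝ)) :
    Lk k ((1 - X ^ 2) * p) = (1 - Polynomial.X ^ 2) * Lk k p := by
  have h : ((1 : Polynomial (Polynomial ℝ)) - X ^ 2) =
      ((1 - Polynomial.X ^ 2 : Polynomial ℝ)).map Polynomial.C := by
    simp
  rw [h, Lk_map_C_mul]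

lemma elephantR2_succ (n : ℕ) (hn : 1 ≤ n) :
    elephantR2 (n + 1) = X * elephantR2 n -
      C (Polynomial.C ((n : ℝ))⁻¹ * Polynomial.X) *
        ((1 - X ^ 2) * (elephantR2 n).derivative) := by
  obtain ⟨m, rfl⟩ : ∃ m, n = m + 1 := ⟨n - 1, (Nat.succ_pred_eq_of_pos hn).symm⟩
  rw [show m + 1 + 1 = m + 2 from rfl, elephantR2]
  push_cast
  ring_nf

lemma Lk_elephantR2_eq_zero (n : ℕ) (hn : 1 ≤ n) : ∀ k, n ≤ k → Lk k (elephantR2 n) = 0 := by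
  induction n, hn using Nat.le_induction with
  | base =>
    intro k hk
    ext i
    rw [coeff_Lk, elephantR2]
    rcases Nat.exists_eq_add_of_le hk with ⟨j, rfl⟩
    by_cases h : 1 = i
    · simp [Polynomial.coeff_X, h, Polynomial.coeff_one]
      omega
    · simp [Polynomial.coeff_X, h]
  | succ n hn ih =>
    intro k hk
    obtain ⟨k', rfl⟩ : ∃ k', k = k' + 1 := ⟨k - 1, (Nat.succ_pred_eq_of_pos (by omega)).symm⟩
    rw [elephantR2_succ n hn, Lk_sub, Lk_X_mul, ih (k' + 1) (by omega), Lk_C_X_mul,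
      Lk_one_sub_X_sq_mul, Lk_derivative, ih k' (by omega)]
    simp

lemma elephantT_eq (n : ℕ) : elephantT n = Lk (n - 1) (elephantR2 n) := rfl

lemma elephantT_one : elephantT 1 = X := by
  rw [elephantT_eq]
  ext i
  rw [coeff_Lk]
  show ((X : Polynomial (Polynomial ℝ)).coeff i).coeff 0 = _
  by_cases h : 1 = i <;> simp [Polynomial.coeff_X, h, Polynomial.coeff_one]

lemma elephantT_succ (n : ℕ) (hn : 1 ≤ n) :
    elephantT (n + 1) =
      Polynomial.C ((n : ℝ))⁻¹ * ((Polynomial.X ^ 2 - 1) * (elephantT n).derivative) := by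
  obtain ⟨m, rfl⟩ : ∃ m, n = m + 1 := ⟨n - 1, (Nat.succ_pred_eq_of_pos hn).symm⟩
  rw [elephantT_eq, show m + 1 + 1 - 1 = m + 1 from rfl,
    elephantR2_succ (m + 1) (by omega), Lk_sub, Lk_X_mul,
    Lk_elephantR2_eq_zero (m + 1) (by omega) (m + 1) le_rfl, Lk_C_X_mul,
    Lk_one_sub_X_sq_mul, Lk_derivative]
  rw [show Lk m (elephantR2 (m + 1)) = elephantT (m + 1) from rfl]
  ring

lemma elephantT_eq_V (n : ℕ) (hn : 1 ≤ n) :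
    elephantT n =
      Polynomial.C ((-1 : ℝ) ^ (n - 1) / (n - 1).factorial) * elephantV (n - 1) := by
  obtain ⟨m, rfl⟩ : ∃ m, n = m + 1 := ⟨n - 1, (Nat.succ_pred_eq_of_pos hn).symm⟩
  rw [show m + 1 - 1 = m from rfl]
  induction m with
  | zero => simp [elephantT_one, elephantV]
  | succ m ih =>
    rw [elephantT_succ (m + 1) (by omega), ih (by omega), derivative_C_mul]
    rw [show elephantV (m + 1) = (1 - Polynomial.X ^ 2) * (elephantV m).derivative from rfl]
    have hs : (-1 : ℝ) ^ (m + 1) / (m + 1).factorial =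
        -((((m : ℝ) + 1))⁻¹ * ((-1 : ℝ) ^ m / m.factorial)) := by
      rw [Nat.factorial_succ, pow_succ]
      have h1 : ((m : ℝ) + 1) ≠ 0 := by positivity
      have h2 : ((m.factorial : ℝ)) ≠ 0 := Nat.cast_ne_zero.mpr m.factorial_ne_zero
      push_cast
      field_simp
      try ring
    push_cast
    rw [hs, map_neg, map_mul]
    ring

lemma hasDerivAt_tanh (x : ℝ) : HasDerivAt Real.tanh (1 - Real.tanh x ^ 2) x := by
  have h1 := Real.hasDerivAt_sinh x
  have h2 := Real.hasDerivAt_cosh x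
  have hc : Real.cosh x ≠ 0 := (Real.cosh_pos x).ne'
  have h := h1.div h2 hc
  have hf : Real.tanh = fun y => Real.sinh y / Real.cosh y := by
    funext y; exact Real.tanh_eq_sinh_div_cosh y
  have hsq := Real.cosh_sq_sub_sinh_sq x
  have hval : 1 - Real.tanh x ^ 2 =
      (Real.cosh x * Real.cosh x - Real.sinh x * Real.sinh x) / Real.cosh x ^ 2 := by
    rw [Real.tanh_eq_sinh_div_cosh]
    field_simp
  rw [hval, hf]
  exact h

lemma iteratedDeriv_tanh (n : ℕ) (x : ℝ) :
    iteratedDeriv n Real.tanh x = (elephantV n).eval (Real.tanh x) := by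
  induction n generalizing x with
  | zero => simp [elephantV]
  | succ n ih =>
    rw [iteratedDeriv_succ]
    have hfun : iteratedDeriv n Real.tanh = fun y => (elephantV n).eval (Real.tanh y) :=
      funext fun y => ih y
    rw [hfun]
    have h : HasDerivAt (fun y => (elephantV n).eval (Real.tanh y))
        ((elephantV n).derivative.eval (Real.tanh x) * (1 - Real.tanh x ^ 2)) x :=
      ((elephantV n).hasDerivAt (Real.tanh x)).comp x (hasDerivAt_tanh x)
    rw [h.deriv]
    rw [show elephantV (n + 1) = (1 - Polynomial.X ^ 2) * (elephantV n).derivative from rfl]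
    simp
    ring

theorem stmt_19 :
    elephantT 1 = X ∧
    (∀ n : ℕ, 1 ≤ n →
      elephantT (n + 1) = Polynomial.C ((n : ℝ))⁻¹ * ((X ^ 2 - 1) * (elephantT n).derivative)) ∧
    (∀ n : ℕ, 1 ≤ n →
      elephantT n = Polynomial.C ((-1 : ℝ) ^ (n - 1) / (n - 1).factorial) * elephantV (n - 1)) ∧
    (∀ (n : ℕ) (x : ℝ), iteratedDeriv n Real.tanh x = (elephantV n).eval (Real.tanh x)) :=
  ⟨elephantT_one, elephantT_succ, elephantT_eq_V, iteratedDeriv_tanh⟩
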